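/- arXiv:1903.11689 — 2 statements merged into one kernel-verified Lean document; each statement's English description precedes it below -/
import Mathlib

section
/- For every nonnegative integer n, every nonnegative integer r and every real number x, one has (r + x)^n = ∑_{l=0}^{n} ∑_{k=0}^{l} (x)_k · C(n,l) · T_r(l+r, k+r) · (k/2)^{n-l}. -/
/-- The extended `r`-central factorial numbers of the second kind:
`T_r(n+r,k+r) = (1/k!) ∑_{j=0}^{k} (-1)^{k-j} C(k,j) (j + r - k/2)^n`. -/
noncomputable def rcentralT (r n k : ℕ) : ℝ :=
  (1 / (Nat.factorial k : ℝ)) * ∑ j ∈ Finset.range (k + 1),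
    (-1 : ℝ) ^ (k - j) * (Nat.choose k j : ℝ) * ((j : ℝ) + (r : ℝ) - (k : ℝ) / 2) ^ n

open Finset Polynomial
open scoped fwdDiff

/-- Auxiliary: the `r`-Stirling-like coefficient `(1/k!) Δ^k [(·+r)^n](0)`. -/
noncomputable def aaux (r n k : ℕ) : ℝ :=
  (1 / (Nat.factorial k : ℝ)) * ∑ j ∈ Finset.range (k + 1),
    (-1 : ℝ) ^ (k - j) * (Nat.choose k j : ℝ) * ((j : ℝ) + (r : ℝ)) ^ n

/-- The `k`-th forward difference of `t ↦ (t+c)^l` vanishes for `l < k`. -/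
lemma fwdDiff_iter_pow_eq_zero :
    ∀ l k : ℕ, l < k → ∀ c : ℝ, (fwdDiff (1:ℝ))^[k] (fun t : ℝ => (t + c) ^ l) = 0 := by
  intro l
  induction l using Nat.strong_induction_on with
  | _ l IH =>
    intro k hk c
    obtain ⟨k, rfl⟩ : ∃ k', k = k' + 1 := ⟨k - 1, by omega⟩
    rw [Function.iterate_succ_apply]
    have hΔ : fwdDiff (1:ℝ) (fun t : ℝ => (t + c) ^ l)
        = ∑ i ∈ Finset.range l, (l.choose i : ℝ) • fun t : ℝ => (t + c) ^ i := by
      ext t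
      simp only [fwdDiff, Finset.sum_apply, Pi.smul_apply, smul_eq_mul]
      have h1 : (t + 1 + c) = (t + c) + 1 := by ring
      rw [h1, add_pow, Finset.sum_range_succ]
      simp only [one_pow, mul_one, Nat.choose_self, Nat.cast_one, Nat.sub_self, pow_zero]
      rw [add_sub_cancel_right]
      exact Finset.sum_congr rfl fun i _ => by ring
    rw [hΔ, fwdDiff_iter_finset_sum]
    refine Finset.sum_eq_zero fun i hi => ?_
    rw [fwdDiff_iter_const_smul, IH i (Finset.mem_range.mp hi) k (by
      have := Finset.mem_range.mp hi; omega) c, smul_zero]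

/-- `T_r(n+r,k+r) = 0` for `n < k`. -/
lemma rcentralT_eq_zero_of_lt (r : ℕ) {n k : ℕ} (h : n < k) : rcentralT r n k = 0 := by
  have h0 := fwdDiff_iter_eq_sum_shift (1:ℝ)
    (fun t : ℝ => (t + ((r : ℝ) - (k : ℝ) / 2)) ^ n) k 0
  rw [fwdDiff_iter_pow_eq_zero n k h, Pi.zero_apply] at h0
  rw [rcentralT]
  have hsum : ∑ j ∈ Finset.range (k + 1),
      (-1 : ℝ) ^ (k - j) * (Nat.choose k j : ℝ) * ((j : ℝ) + (r : ℝ) - (k : ℝ) / 2) ^ n = 0 := by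
    rw [h0]
    refine Finset.sum_congr rfl fun j _ => ?_
    simp only [zero_add, smul_eq_mul, nsmul_eq_mul, mul_one, zsmul_eq_mul]
    push_cast
    ring
  rw [hsum, mul_zero]

/-- Newton's forward difference formula at natural arguments. -/
lemma newton_nat (n r m : ℕ) (hm : m ≤ n) :
    ((m : ℝ) + (r : ℝ)) ^ n
      = ∑ k ∈ Finset.range (n + 1), aaux r n k * (m.descFactorial k : ℝ) := by
  have hfd : ∀ k : ℕ, (fwdDiff (1:ℕ))^[k] (fun t : ℕ => ((r : ℝ) + t) ^ n) 0
      = (Nat.factorial k : ℝ) * aaux r n k := by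
    intro k
    rw [fwdDiff_iter_eq_sum_shift]
    have : (Nat.factorial k : ℝ) * aaux r n k
        = ∑ j ∈ Finset.range (k + 1),
            (-1 : ℝ) ^ (k - j) * (Nat.choose k j : ℝ) * ((j : ℝ) + (r : ℝ)) ^ n := by
      rw [aaux, ← mul_assoc, mul_one_div_cancel (by exact_mod_cast k.factorial_ne_zero), one_mul]
    rw [this]
    refine Finset.sum_congr rfl fun j _ => ?_
    simp only [zero_add, smul_eq_mul, mul_one, zsmul_eq_mul]
    push_cast
    ring
  have GN := shift_eq_sum_fwdDiff_iter (1:ℕ) (fun t : ℕ => ((r : ℝ) + t) ^ n) m 0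
  simp only [zero_add, smul_eq_mul, mul_one, nsmul_eq_mul, hfd] at GN
  have hsub : ∑ k ∈ Finset.range (n + 1), aaux r n k * (m.descFactorial k : ℝ)
      = ∑ k ∈ Finset.range (m + 1), aaux r n k * (m.descFactorial k : ℝ) := by
    refine (Finset.sum_subset (Finset.range_subset_range.mpr (by omega)) fun k hk hk' => ?_).symm
    have : m < k := by
      simp only [Finset.mem_range] at hk hk'; omega
    rw [Nat.descFactorial_eq_zero_iff_lt.mpr this, Nat.cast_zero, mul_zero]
  rw [hsub, add_comm, GN]
  refine Finset.sum_congr rfl fun k _ => ?_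
  rw [Nat.descFactorial_eq_factorial_mul_choose]
  push_cast
  ring

/-- Newton's forward difference formula for `(r+x)^n`, real `x`. -/
lemma newton_real (n r : ℕ) (x : ℝ) :
    ((r : ℝ) + x) ^ n
      = ∑ k ∈ Finset.range (n + 1), (descPochhammer ℝ k).eval x * aaux r n k := by
  set s : Finset ℝ := (Finset.range (n + 1)).image (Nat.cast : ℕ → ℝ) with hs
  have hcard : s.card = n + 1 := by
    rw [hs, Finset.card_image_of_injective _ Nat.cast_injective, Finset.card_range]
  have key : (Polynomial.X + Polynomial.C (r : ℝ)) ^ n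
      = ∑ k ∈ Finset.range (n + 1), Polynomial.C (aaux r n k) * descPochhammer ℝ k := by
    apply Polynomial.eq_of_degrees_lt_of_eval_finset_eq s
    · rw [hcard]
      refine lt_of_le_of_lt (Polynomial.degree_pow_le _ _) ?_
      rw [Polynomial.degree_X_add_C]
      have : n • (1 : WithBot ℕ) = (n : WithBot ℕ) := by
        simp [nsmul_eq_mul]
      rw [this]
      exact_mod_cast Nat.lt_succ_self n
    · rw [hcard]
      refine lt_of_le_of_lt (Polynomial.degree_sum_le _ _) ?_
      rw [Finset.sup_lt_iff (by exact_mod_cast WithBot.bot_lt_coe (n+1))]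
      intro k hk
      refine lt_of_le_of_lt (Polynomial.degree_mul_le _ _) ?_
      have h1 : (Polynomial.C (aaux r n k)).degree ≤ 0 := Polynomial.degree_C_le
      have h2 : (descPochhammer ℝ k).degree ≤ (k : WithBot ℕ) := by
        refine le_trans (Polynomial.degree_le_natDegree) ?_
        rw [descPochhammer_natDegree]
      refine lt_of_le_of_lt (add_le_add h1 h2) ?_
      rw [zero_add]
      exact_mod_cast Finset.mem_range.mp hk
    · intro y hy
      rw [hs] at hy
      obtain ⟨m, hm, rfl⟩ := Finset.mem_image.mp hy
      have hmn : m ≤ n := Nat.lt_succ_iff.mp (Finset.mem_range.mp hm)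
      rw [Polynomial.eval_pow, Polynomial.eval_add, Polynomial.eval_X, Polynomial.eval_C,
        Polynomial.eval_finset_sum]
      simp only [Polynomial.eval_mul, Polynomial.eval_C,
        descPochhammer_eval_eq_descFactorial]
      exact newton_nat n r m hmn
  have := congrArg (Polynomial.eval x) key
  rw [Polynomial.eval_pow, Polynomial.eval_add, Polynomial.eval_X, Polynomial.eval_C,
    Polynomial.eval_finset_sum] at this
  simp only [Polynomial.eval_mul, Polynomial.eval_C] at this
  rw [add_comm x ((r:ℝ))] at this
  rw [this]
  exact Finset.sum_congr rfl fun k _ => mul_comm _ _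

/-- Binomial recombination of the inner sum. -/
lemma innerSumAux (n r k : ℕ) :
    ∑ l ∈ Finset.range (n + 1),
        (Nat.choose n l : ℝ) * rcentralT r l k * ((k : ℝ) / 2) ^ (n - l)
      = aaux r n k := by
  unfold rcentralT aaux
  rw [Finset.mul_sum]
  have step1 : ∀ l ∈ Finset.range (n + 1),
      (Nat.choose n l : ℝ) * ((1 / (Nat.factorial k : ℝ)) * ∑ j ∈ Finset.range (k + 1),
          (-1 : ℝ) ^ (k - j) * (Nat.choose k j : ℝ)
            * ((j : ℝ) + (r : ℝ) - (k : ℝ) / 2) ^ l) * ((k : ℝ) / 2) ^ (n - l)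
      = ∑ j ∈ Finset.range (k + 1),
          (1 / (Nat.factorial k : ℝ)) * ((-1 : ℝ) ^ (k - j) * (Nat.choose k j : ℝ))
            * (((j : ℝ) + (r : ℝ) - (k : ℝ) / 2) ^ l * ((k : ℝ) / 2) ^ (n - l)
                * (Nat.choose n l : ℝ)) := by
    intro l _
    simp only [Finset.mul_sum, Finset.sum_mul]
    exact Finset.sum_congr rfl fun j _ => by ring
  rw [Finset.sum_congr rfl step1, Finset.sum_comm]
  refine Finset.sum_congr rfl fun j _ => ?_
  rw [← Finset.mul_sum, ← add_pow]
  have : (j : ℝ) + (r : ℝ) - (k : ℝ) / 2 + (k : ℝ) / 2 = (j : ℝ) + (r : ℝ) := by ring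
  rw [this]
  ring

/-- For every nonnegative integer `n`, nonnegative integer `r` and real `x`:
`(r + x)^n = ∑_{l=0}^{n} ∑_{k=0}^{l} (x)_k · C(n,l) · T_r(l+r,k+r) · (k/2)^{n-l}`,
where `(x)_k` is the falling factorial. -/
theorem pow_eq_double_sum_rcentralT (n r : ℕ) (x : ℝ) :
    ((r : ℝ) + x) ^ n =
      ∑ l ∈ Finset.range (n + 1), ∑ k ∈ Finset.range (l + 1),
        (descPochhammer ℝ k).eval x * (Nat.choose n l : ℝ) * rcentralT r l k *
          ((k : ℝ) / 2) ^ (n - l) := by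
  calc ((r : ℝ) + x) ^ n
      = ∑ k ∈ Finset.range (n + 1), (descPochhammer ℝ k).eval x * aaux r n k :=
        newton_real n r x
    _ = ∑ k ∈ Finset.range (n + 1), ∑ l ∈ Finset.range (n + 1),
          (descPochhammer ℝ k).eval x * (Nat.choose n l : ℝ) * rcentralT r l k *
            ((k : ℝ) / 2) ^ (n - l) := by
        refine Finset.sum_congr rfl fun k _ => ?_
        rw [← innerSumAux n r k, Finset.mul_sum]
        exact Finset.sum_congr rfl fun l _ => by ring
    _ = ∑ l ∈ Finset.range (n + 1), ∑ k ∈ Finset.range (n + 1),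
          (descPochhammer ℝ k).eval x * (Nat.choose n l : ℝ) * rcentralT r l k *
            ((k : ℝ) / 2) ^ (n - l) := Finset.sum_comm
    _ = ∑ l ∈ Finset.range (n + 1), ∑ k ∈ Finset.range (l + 1),
          (descPochhammer ℝ k).eval x * (Nat.choose n l : ℝ) * rcentralT r l k *
            ((k : ℝ) / 2) ^ (n - l) := by
        refine Finset.sum_congr rfl fun l hl => ?_
        refine (Finset.sum_subset (Finset.range_subset_range.mpr ?_) fun k hk hk' => ?_).symm
        · have := Finset.mem_range.mp hl; omega
        · have hlk : l < k := by
            simp only [Finset.mem_range] at hk hk'; omega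
          rw [rcentralT_eq_zero_of_lt r hlk, mul_zero, zero_mul]
end

section
/- For every nonnegative integer n, every nonnegative integer r, and every real x, one has B_n^{(c,r)}(x) = ∑_{l=0}^{n} ∑_{m=0}^{l} x^m · C(n,l) · S_2(l,m) · (r - m/2)^{n-l}. -/
/-- The extended `r`-central Bell polynomials: `B_n^{(c,r)}(x) = ∑_{k=0}^{n} T_r(n+r,k+r) x^k`. -/
noncomputable def rcentralBell (r n : ℕ) (x : ℝ) : ℝ :=
  ∑ k ∈ Finset.range (n + 1), rcentralT r n k * x ^ k

/-- The Stirling numbers of the second kind: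
`S_2(n,k) = (1/k!) ∑_{j=0}^{k} (-1)^{k-j} C(k,j) j^n`. -/
noncomputable def stirling2 (n k : ℕ) : ℝ :=
  (1 / (Nat.factorial k : ℝ)) * ∑ j ∈ Finset.range (k + 1),
    (-1 : ℝ) ^ (k - j) * (Nat.choose k j : ℝ) * (j : ℝ) ^ n

/-- Auxiliary alternating sum. -/
noncomputable def altA (k l : ℕ) : ℝ :=
  ∑ j ∈ Finset.range (k + 1), (-1 : ℝ) ^ (k - j) * (Nat.choose k j : ℝ) * (j : ℝ) ^ l

lemma altA_succ (k l : ℕ) :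
    altA (k + 1) l = (∑ m ∈ Finset.range (l + 1), (Nat.choose l m : ℝ) * altA k m) - altA k l := by
  have h1 : altA (k + 1) l =
      (∑ i ∈ Finset.range (k + 1),
        (-1 : ℝ) ^ (k - i) * (Nat.choose (k + 1) (i + 1) : ℝ) * ((i : ℝ) + 1) ^ l)
      + (-1 : ℝ) ^ (k + 1) * (0 : ℝ) ^ l := by
    rw [altA, Finset.sum_range_succ']
    simp
  have h2 : ∀ i ∈ Finset.range (k + 1),
      (-1 : ℝ) ^ (k - i) * (Nat.choose (k + 1) (i + 1) : ℝ) * ((i : ℝ) + 1) ^ l =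
      (-1 : ℝ) ^ (k - i) * (Nat.choose k i : ℝ) * ((i : ℝ) + 1) ^ l
      + (-1 : ℝ) ^ (k - i) * (Nat.choose k (i + 1) : ℝ) * ((i : ℝ) + 1) ^ l := by
    intro i _
    rw [Nat.choose_succ_succ']
    push_cast
    ring
  rw [h1, Finset.sum_congr rfl h2, Finset.sum_add_distrib]
  -- second sum reindexed equals -altA k l minus its j=0 term
  have h3 : (∑ i ∈ Finset.range (k + 1),
      (-1 : ℝ) ^ (k - i) * (Nat.choose k (i + 1) : ℝ) * ((i : ℝ) + 1) ^ l)
      + (-1 : ℝ) ^ (k + 1) * (0 : ℝ) ^ l = - altA k l := by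
    have hre : (∑ i ∈ Finset.range (k + 1),
        (-1 : ℝ) ^ (k - i) * (Nat.choose k (i + 1) : ℝ) * ((i : ℝ) + 1) ^ l)
        = ∑ i ∈ Finset.range k,
        (-1 : ℝ) ^ (k - i) * (Nat.choose k (i + 1) : ℝ) * ((i : ℝ) + 1) ^ l := by
      rw [Finset.sum_range_succ]
      simp
    rw [hre, altA]
    rw [Finset.sum_range_succ' (fun j => (-1 : ℝ) ^ (k - j) * (Nat.choose k j : ℝ) * (j : ℝ) ^ l)]
    have : ∀ i ∈ Finset.range k,
        (-1 : ℝ) ^ (k - i) * (Nat.choose k (i + 1) : ℝ) * ((i : ℝ) + 1) ^ l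
        = -((-1 : ℝ) ^ (k - (i + 1)) * (Nat.choose k (i + 1) : ℝ) * ((i : ℝ) + 1) ^ l) := by
      intro i hi
      have hik : i < k := Finset.mem_range.mp hi
      have : k - i = (k - (i + 1)) + 1 := by omega
      rw [this, pow_succ]
      ring
    rw [Finset.sum_congr rfl this, Finset.sum_neg_distrib]
    simp only [Nat.sub_zero, Nat.choose_zero_right, Nat.cast_one, Nat.cast_zero, pow_succ]
    push_cast
    ring
  rw [add_assoc, h3]
  have h4 : ∀ i ∈ Finset.range (k + 1),
      (-1 : ℝ) ^ (k - i) * (Nat.choose k i : ℝ) * ((i : ℝ) + 1) ^ l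
      = ∑ m ∈ Finset.range (l + 1),
          (Nat.choose l m : ℝ) * ((-1 : ℝ) ^ (k - i) * (Nat.choose k i : ℝ) * (i : ℝ) ^ m) := by
    intro i _
    rw [add_pow]
    rw [Finset.mul_sum]
    apply Finset.sum_congr rfl
    intro m _
    simp
    ring
  rw [Finset.sum_congr rfl h4, Finset.sum_comm]
  congr 1
  apply Finset.sum_congr rfl
  intro m _
  rw [altA, Finset.mul_sum]

lemma altA_eq_zero : ∀ k l : ℕ, l < k → altA k l = 0 := by
  intro k
  induction k with
  | zero => intro l hl; omega
  | succ k ih =>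
    intro l hl
    have hlk : l ≤ k := by omega
    rw [altA_succ, Finset.sum_range_succ, Nat.choose_self]
    have : ∀ m ∈ Finset.range l, (Nat.choose l m : ℝ) * altA k m = 0 := by
      intro m hm
      rw [ih m (lt_of_lt_of_le (Finset.mem_range.mp hm) hlk), mul_zero]
    rw [Finset.sum_eq_zero this]
    simp

lemma stirling2_eq_zero (l k : ℕ) (h : l < k) : stirling2 l k = 0 := by
  have : (∑ j ∈ Finset.range (k + 1),
      (-1 : ℝ) ^ (k - j) * (Nat.choose k j : ℝ) * (j : ℝ) ^ l) = altA k l := rfl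
  rw [stirling2, this, altA_eq_zero k l h, mul_zero]

lemma rcentralT_eq (r n k : ℕ) :
    rcentralT r n k = ∑ l ∈ Finset.range (n + 1),
      (Nat.choose n l : ℝ) * stirling2 l k * ((r : ℝ) - (k : ℝ) / 2) ^ (n - l) := by
  rw [rcentralT]
  have h : ∀ j ∈ Finset.range (k + 1),
      (-1 : ℝ) ^ (k - j) * (Nat.choose k j : ℝ) * ((j : ℝ) + (r : ℝ) - (k : ℝ) / 2) ^ n
      = ∑ l ∈ Finset.range (n + 1),
          (Nat.choose n l : ℝ) * ((-1 : ℝ) ^ (k - j) * (Nat.choose k j : ℝ) * (j : ℝ) ^ l)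
            * ((r : ℝ) - (k : ℝ) / 2) ^ (n - l) := by
    intro j _
    have : ((j : ℝ) + (r : ℝ) - (k : ℝ) / 2) = (j : ℝ) + ((r : ℝ) - (k : ℝ) / 2) := by ring
    rw [this, add_pow, Finset.mul_sum]
    apply Finset.sum_congr rfl
    intro l _
    ring
  rw [Finset.sum_congr rfl h, Finset.sum_comm, Finset.mul_sum]
  apply Finset.sum_congr rfl
  intro l _
  rw [stirling2]
  simp only [Finset.mul_sum, Finset.sum_mul]
  apply Finset.sum_congr rfl
  intro j _
  ring

/-- For every nonnegative integer `n`, nonnegative integer `r` and real `x`: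
`B_n^{(c,r)}(x) = ∑_{l=0}^{n} ∑_{m=0}^{l} x^m · C(n,l) · S_2(l,m) · (r - m/2)^{n-l}`. -/
theorem rcentralBell_eq_double_sum_stirling2 (n r : ℕ) (x : ℝ) :
    rcentralBell r n x =
      ∑ l ∈ Finset.range (n + 1), ∑ m ∈ Finset.range (l + 1),
        x ^ m * (Nat.choose n l : ℝ) * stirling2 l m * ((r : ℝ) - (m : ℝ) / 2) ^ (n - l) := by
  rw [rcentralBell]
  have h : ∀ k ∈ Finset.range (n + 1),
      rcentralT r n k * x ^ k = ∑ l ∈ Finset.range (n + 1),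
        x ^ k * (Nat.choose n l : ℝ) * stirling2 l k * ((r : ℝ) - (k : ℝ) / 2) ^ (n - l) := by
    intro k _
    rw [rcentralT_eq, Finset.sum_mul]
    apply Finset.sum_congr rfl
    intro l _
    ring
  rw [Finset.sum_congr rfl h, Finset.sum_comm]
  apply Finset.sum_congr rfl
  intro l hl
  have hln : l ≤ n := by
    have := Finset.mem_range.mp hl; omega
  symm
  apply Finset.sum_subset
  · intro m hm
    rw [Finset.mem_range] at *
    omega
  · intro m _ hm
    rw [Finset.mem_range, not_lt] at hm
    rw [stirling2_eq_zero l m (by omega)]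
    ring
end
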